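/- Let R be a commutative ring, 𝔗 a half centered torsion theory over R, 𝔞 a finitely generated ideal of R, and M an R-module. Then 𝔗-Kgrade_R(𝔞,M) = inf{ Kgrade_{R_𝔭}(𝔞R_𝔭, M_𝔭) : 𝔭 ∈ 𝔗-Supp_R(M) }, where Kgrade denotes the classical Koszul grade (i.e., the grade with respect to the trivial torsion theory {0}) over the localization R_𝔭. -/

import Mathlib

open CategoryTheory

universe u

noncomputable section

/-- A torsion theory over `R`: a class of `R`-modules closed under isomorphism, submodules,
quotient modules, extensions, and directed colimits (formulated as closure under directed
unions of submodules). -/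
structure IsTorsionTheory (R : Type u) [CommRing R] (T : Set (ModuleCat.{u} R)) : Prop where
  mem_of_iso : ∀ {N N' : ModuleCat.{u} R}, (N ≅ N') → N ∈ T → N' ∈ T
  submodule_mem : ∀ {N : ModuleCat.{u} R}, N ∈ T → ∀ S : Submodule R N,
    ModuleCat.of R S ∈ T
  quotient_mem : ∀ {N : ModuleCat.{u} R}, N ∈ T → ∀ S : Submodule R N,
    ModuleCat.of R (N ⧸ S) ∈ T
  ext_mem : ∀ {N : ModuleCat.{u} R} (S : Submodule R N),
    ModuleCat.of R S ∈ T → ModuleCat.of R (N ⧸ S) ∈ T → N ∈ T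
  directed_mem : ∀ {N : ModuleCat.{u} R} {ι : Type u} [Nonempty ι] (S : ι → Submodule R N),
    Directed (· ≤ ·) S → (∀ i, ModuleCat.of R (S i) ∈ T) → iSup S = ⊤ → N ∈ T

variable {R : Type u} [CommRing R]

/-- The "outgoing" differential of the Koszul cocomplex `Hom_R(K_•(x), M)`, whose degree `i`
component is indexed by the `i`-element subsets of `{1, …, r}`. -/
def koszulDiff {r : ℕ} (x : Fin r → R) (M : Type u) [AddCommGroup M] [Module R M] (i : ℕ) :
    ({s : Finset (Fin r) // s.card = i} → M) →ₗ[R]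
      ({s : Finset (Fin r) // s.card = i + 1} → M) where
  toFun φ t := ∑ j ∈ t.1.attach,
    ((-1 : R) ^ (t.1.filter (fun k => k < j.1)).card * x j.1) •
      φ ⟨t.1.erase j.1, by simp [Finset.card_erase_of_mem j.2, t.2]⟩
  map_add' φ ψ := by
    funext t
    simp [Finset.sum_add_distrib, smul_add]
  map_smul' c φ := by
    funext t
    simp [Finset.smul_sum, smul_comm c]

/-- The "incoming" differential of the Koszul cocomplex in degree `i`
(its source is trivial when `i = 0`). -/
def koszulDiffIn {r : ℕ} (x : Fin r → R) (M : Type u) [AddCommGroup M] [Module R M] (i : ℕ) :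
    ({s : Finset (Fin r) // s.card + 1 = i} → M) →ₗ[R]
      ({s : Finset (Fin r) // s.card = i} → M) where
  toFun φ t := ∑ j ∈ t.1.attach,
    ((-1 : R) ^ (t.1.filter (fun k => k < j.1)).card * x j.1) •
      φ ⟨t.1.erase j.1, by rw [Finset.card_erase_add_one j.2]; exact t.2⟩
  map_add' φ ψ := by
    funext t
    simp [Finset.sum_add_distrib, smul_add]
  map_smul' c φ := by
    funext t
    simp [Finset.smul_sum, smul_comm c]

/-- The `i`-th Koszul cohomology `H^i(x; M)` of `M` with respect to `x₁, …, x_r`, i.e. the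
`i`-th cohomology of the cocomplex `Hom_R(K_•(x), M)`. -/
abbrev koszulCohomology {r : ℕ} (x : Fin r → R) (M : Type u) [AddCommGroup M] [Module R M]
    (i : ℕ) : Type u :=
  ↥(LinearMap.ker (koszulDiff x M i)) ⧸
    (Submodule.comap (LinearMap.ker (koszulDiff x M i)).subtype
      (LinearMap.range (koszulDiffIn x M i)))

/-- The `𝔗`-Koszul grade of the ideal `(x₁, …, x_r)` on `M`: the infimum of the set of `i`
such that `H^i(x; M) ∉ 𝔗` (with `inf ∅ = +∞`). -/
def TKgrade (T : Set (ModuleCat.{u} R)) {r : ℕ} (x : Fin r → R) (M : Type u)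
    [AddCommGroup M] [Module R M] : ℕ∞ :=
  sInf ((↑· : ℕ → ℕ∞) '' {i | ModuleCat.of R (koszulCohomology x M i) ∉ T})

/-- A torsion theory `𝔗` is half centered if every module `N` such that `R/𝔭 ∈ 𝔗` for all
primes `𝔭` in the support of `N` itself belongs to `𝔗`. -/
def IsHalfCentered {R : Type u} [CommRing R] (T : Set (ModuleCat.{u} R)) : Prop :=
  ∀ N : ModuleCat.{u} R,
    (∀ p ∈ Module.support R N, ModuleCat.of R (R ⧸ p.asIdeal) ∈ T) → N ∈ T

section Loc
variable (S : Submonoid R) {M : Type u} [AddCommGroup M] [Module R M]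

lemma mk_one_eq_zero_iff (m : M) :
    LocalizedModule.mk m (1 : S) = 0 ↔ ∃ s : S, (s : R) • m = 0 := by
  rw [← LocalizedModule.zero_mk (1 : S), LocalizedModule.mk_eq]
  constructor
  · rintro ⟨u, hu⟩; exact ⟨u, by simpa [Submonoid.smul_def] using hu⟩
  · rintro ⟨s, hs⟩; exact ⟨s, by simpa [Submonoid.smul_def] using hs⟩

lemma pi_mk_surj {ι : Type*} [Fintype ι] [DecidableEq ι] (z : ι → LocalizedModule S M) :
    ∃ (φ : ι → M) (s : S), ∀ t, (s : R) • z t = LocalizedModule.mk (φ t) 1 := by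
  have h : ∀ t, ∃ a : M × S, z t = LocalizedModule.mk a.1 a.2 := fun t =>
    LocalizedModule.induction_on (fun m s => ⟨(m, s), rfl⟩) (z t)
  choose a ha using h
  have h1 : ∀ t, ((a t).2 : R) • z t = LocalizedModule.mk (a t).1 1 := by
    intro t
    rw [ha t, LocalizedModule.smul'_mk, ← Submonoid.smul_def, LocalizedModule.mk_cancel]
  refine ⟨fun t => (∏ t' ∈ Finset.univ.erase t, ((a t').2 : R)) • (a t).1,
    ∏ t', (a t').2, fun t => ?_⟩
  have hsplit : ((∏ t', (a t').2 : S) : R)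
      = (∏ t' ∈ Finset.univ.erase t, ((a t').2 : R)) * ((a t).2 : R) := by
    rw [← Finset.prod_erase_mul Finset.univ _ (Finset.mem_univ t)]
    push_cast; ring
  rw [hsplit, mul_smul, h1, LocalizedModule.smul'_mk]

lemma pi_mk_zero {ι : Type*} [Fintype ι] [DecidableEq ι] (φ : ι → M)
    (h : ∀ t, LocalizedModule.mk (φ t) (1 : S) = 0) :
    ∃ s : S, ∀ t, (s : R) • φ t = 0 := by
  choose u hu using fun t => (mk_one_eq_zero_iff S (φ t)).mp (h t)
  refine ⟨∏ t', u t', fun t => ?_⟩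
  have hsplit : ((∏ t', u t' : S) : R)
      = (∏ t' ∈ Finset.univ.erase t, ((u t') : R)) * ((u t) : R) := by
    rw [← Finset.prod_erase_mul Finset.univ _ (Finset.mem_univ t)]
    push_cast; ring
  rw [hsplit, mul_smul, hu, smul_zero]

lemma koszulDiff_mk {r i : ℕ} (x : Fin r → R)
    (φ : {s : Finset (Fin r) // s.card = i} → M) (t : {s : Finset (Fin r) // s.card = i + 1}) :
    koszulDiff (fun j => algebraMap R (Localization S) (x j)) (LocalizedModule S M) i
      (fun t' => LocalizedModule.mk (φ t') 1) t
      = LocalizedModule.mk (koszulDiff x M i φ t) 1 := by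
  have h1 : ∀ m : M, (LocalizedModule.mk m (1 : S)) = LocalizedModule.mkLinearMap S M m :=
    fun _ => rfl
  simp only [koszulDiff, LinearMap.coe_mk, AddHom.coe_mk, h1, map_sum, map_smul]
  refine Finset.sum_congr rfl fun j _ => ?_
  have h2 : ((-1 : Localization S) ^ (t.1.filter (fun k => k < j.1)).card
      * algebraMap R (Localization S) (x j.1))
      = algebraMap R (Localization S) ((-1 : R) ^ (t.1.filter (fun k => k < j.1)).card * x j.1) := by
    rw [map_mul, map_pow, map_neg, map_one]
  rw [h2, algebraMap_smul]

lemma koszulDiffIn_mk {r i : ℕ} (x : Fin r → R)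
    (φ : {s : Finset (Fin r) // s.card + 1 = i} → M) (t : {s : Finset (Fin r) // s.card = i}) :
    koszulDiffIn (fun j => algebraMap R (Localization S) (x j)) (LocalizedModule S M) i
      (fun t' => LocalizedModule.mk (φ t') 1) t
      = LocalizedModule.mk (koszulDiffIn x M i φ t) 1 := by
  have h1 : ∀ m : M, (LocalizedModule.mk m (1 : S)) = LocalizedModule.mkLinearMap S M m :=
    fun _ => rfl
  simp only [koszulDiffIn, LinearMap.coe_mk, AddHom.coe_mk, h1, map_sum, map_smul]
  refine Finset.sum_congr rfl fun j _ => ?_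
  have h2 : ((-1 : Localization S) ^ (t.1.filter (fun k => k < j.1)).card
      * algebraMap R (Localization S) (x j.1))
      = algebraMap R (Localization S) ((-1 : R) ^ (t.1.filter (fun k => k < j.1)).card * x j.1) := by
    rw [map_mul, map_pow, map_neg, map_one]
  rw [h2, algebraMap_smul]

end Loc
lemma unit_smul_mem {Rp : Type u} [CommRing Rp] {N : Type u} [AddCommGroup N] [Module Rp N]
    (W : Submodule Rp N) {c : Rp} (hc : IsUnit c) {v : N} (h : c • v ∈ W) : v ∈ W := by
  have h2 := W.smul_mem (↑hc.unit⁻¹) h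
  rwa [smul_smul, IsUnit.val_inv_mul, one_smul] at h2

lemma koszulCohomology_subsingleton {R' : Type u} [CommRing R'] {r : ℕ} (x : Fin r → R')
    (M : Type u) [AddCommGroup M] [Module R' M] [Subsingleton M] (i : ℕ) :
    Subsingleton (koszulCohomology x M i) :=
  haveI : Subsingleton (LinearMap.ker (koszulDiff x M i)) :=
    ⟨fun a b => Subtype.ext (Subsingleton.elim _ _)⟩
  (Submodule.Quotient.mk_surjective _).subsingleton

lemma nontrivial_kc_iff {R' : Type u} [CommRing R'] {r : ℕ} (x : Fin r → R')
    (M : Type u) [AddCommGroup M] [Module R' M] (i : ℕ) :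
    Nontrivial (koszulCohomology x M i) ↔
      ∃ z, koszulDiff x M i z = 0 ∧ z ∉ LinearMap.range (koszulDiffIn x M i) := by
  constructor
  · intro h
    obtain ⟨q, hq⟩ := exists_ne (0 : koszulCohomology x M i)
    obtain ⟨z, rfl⟩ := Submodule.Quotient.mk_surjective _ q
    refine ⟨z.1, z.2, fun hz => hq ?_⟩
    rw [Submodule.Quotient.mk_eq_zero]
    simpa [Submodule.mem_comap] using hz
  · rintro ⟨z, hz1, hz2⟩
    refine nontrivial_of_ne (Submodule.Quotient.mk ⟨z, hz1⟩) 0 fun h => hz2 ?_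
    have := (Submodule.Quotient.mk_eq_zero _).mp h
    simpa [Submodule.mem_comap] using this

lemma supp_kc_iff {M : Type u} [AddCommGroup M] [Module R M] {r : ℕ} (x : Fin r → R)
    (i : ℕ) (p : PrimeSpectrum R) :
    p ∈ Module.support R (koszulCohomology x M i) ↔
      ∃ z, koszulDiff x M i z = 0 ∧
        ∀ s : p.asIdeal.primeCompl, (s : R) • z ∉ LinearMap.range (koszulDiffIn x M i) := by
  rw [Module.mem_support_iff']
  constructor
  · rintro ⟨h, hh⟩
    obtain ⟨q, rfl⟩ := Submodule.Quotient.mk_surjective _ h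
    refine ⟨q.1, q.2, fun s hs => hh s s.2 ?_⟩
    rw [← Submodule.Quotient.mk_smul, Submodule.Quotient.mk_eq_zero]
    simpa [Submodule.mem_comap] using hs
  · rintro ⟨z, hz1, hz2⟩
    refine ⟨Submodule.Quotient.mk ⟨z, hz1⟩, fun s hs h0 => hz2 ⟨s, hs⟩ ?_⟩
    rw [← Submodule.Quotient.mk_smul, Submodule.Quotient.mk_eq_zero] at h0
    simpa [Submodule.mem_comap] using h0
lemma key_iff {M : Type u} [AddCommGroup M] [Module R M] {r : ℕ} (x : Fin r → R)
    (p : PrimeSpectrum R) (i : ℕ) :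
    Nontrivial (koszulCohomology
        (fun j => algebraMap R (Localization p.asIdeal.primeCompl) (x j))
        (LocalizedModule p.asIdeal.primeCompl M) i)
      ↔ p ∈ Module.support R (koszulCohomology x M i) := by
  set S := p.asIdeal.primeCompl with hS
  set Rp := Localization p.asIdeal.primeCompl with hRp
  set x' : Fin r → Rp := fun j => algebraMap R Rp (x j) with hx'
  have hunit : ∀ s : S, IsUnit (algebraMap R Rp (s : R)) := fun s =>
    IsLocalization.map_units Rp s
  rw [nontrivial_kc_iff, supp_kc_iff]
  constructor
  · rintro ⟨z, hz1, hz2⟩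
    obtain ⟨φ, s, hφ⟩ := pi_mk_surj (ι := {s : Finset (Fin r) // s.card = i}) S z
    have hsz : (fun t => LocalizedModule.mk (φ t) (1 : S)) = algebraMap R Rp (s : R) • z := by
      funext t
      rw [← hφ t, Pi.smul_apply, algebraMap_smul]
    have h0 : ∀ t, LocalizedModule.mk (koszulDiff x M i φ t) (1 : S) = 0 := by
      intro t
      rw [← koszulDiff_mk S x φ t, hsz, map_smul, hz1]
      simp
    obtain ⟨t₀, ht₀⟩ := pi_mk_zero S _ h0
    refine ⟨(t₀ : R) • φ, ?_, ?_⟩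
    · rw [map_smul]
      funext t
      rw [Pi.smul_apply, ht₀ t]
      simp
    · rintro u ⟨ψ, hψ⟩
      apply hz2
      have key2 : algebraMap R Rp ((u : R) * (t₀ : R) * (s : R)) • z ∈
          LinearMap.range (koszulDiffIn x' (LocalizedModule S M) i) := by
        refine ⟨fun t => LocalizedModule.mk (ψ t) 1, ?_⟩
        funext t
        rw [Pi.smul_apply, koszulDiffIn_mk S x ψ t]
        have e1 : koszulDiffIn x M i ψ t = ((u : R) * (t₀ : R)) • φ t := by
          rw [hψ]
          simp [mul_smul]
        rw [e1, ← LocalizedModule.smul'_mk, ← hφ t]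
        rw [← algebraMap_smul Rp ((u : R) * (t₀ : R)), ← algebraMap_smul Rp (s : R) (z t),
          smul_smul, ← map_mul]
      exact unit_smul_mem _ (hunit ⟨(u : R) * (t₀ : R) * (s : R),
        S.mul_mem (S.mul_mem u.2 t₀.2) s.2⟩) key2
  · rintro ⟨φ, hφ1, hφ2⟩
    refine ⟨fun t => LocalizedModule.mk (φ t) (1 : S), ?_, ?_⟩
    · funext t
      rw [koszulDiff_mk S x φ t, hφ1]
      simp
    · rintro ⟨w, hw⟩
      obtain ⟨ψ, s, hs⟩ := pi_mk_surj (ι := {s : Finset (Fin r) // s.card + 1 = i}) S w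
      have h1 : ∀ t, LocalizedModule.mk (koszulDiffIn x M i ψ t - (s : R) • φ t) (1 : S) = 0 := by
        intro t
        have e1 : LocalizedModule.mk (koszulDiffIn x M i ψ t) (1 : S)
            = LocalizedModule.mk ((s : R) • φ t) 1 := by
          rw [← koszulDiffIn_mk S x ψ t]
          have e2 : (fun t' => LocalizedModule.mk (ψ t') (1 : S)) = algebraMap R Rp (s : R) • w := by
            funext t'
            rw [← hs t', Pi.smul_apply, algebraMap_smul]
          rw [e2, map_smul, hw, Pi.smul_apply, algebraMap_smul, LocalizedModule.smul'_mk]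
        have e3 : LocalizedModule.mk (koszulDiffIn x M i ψ t - (s : R) • φ t) (1 : S)
            = LocalizedModule.mk (koszulDiffIn x M i ψ t) (1 : S)
              - LocalizedModule.mk ((s : R) • φ t) 1 :=
          map_sub (LocalizedModule.mkLinearMap S M) _ _
        rw [e3, e1, sub_self]
      obtain ⟨t₀, ht₀⟩ := pi_mk_zero S _ h1
      refine hφ2 ⟨(t₀ : R) * (s : R), S.mul_mem t₀.2 s.2⟩ ⟨(t₀ : R) • ψ, ?_⟩
      funext t
      have e4 := ht₀ t
      rw [smul_sub, sub_eq_zero] at e4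
      rw [map_smul, Pi.smul_apply, Pi.smul_apply, e4]
      simp [mul_smul]
lemma quot_mem_of_supp {T : Set (ModuleCat.{u} R)} (hT : IsTorsionTheory R T)
    {N : Type u} [AddCommGroup N] [Module R N] (hN : ModuleCat.of R N ∈ T)
    {p : PrimeSpectrum R} (hp : p ∈ Module.support R N) :
    ModuleCat.of R (R ⧸ p.asIdeal) ∈ T := by
  rw [Module.mem_support_iff'] at hp
  obtain ⟨m, hm⟩ := hp
  have hle : Ideal.torsionOf R N m ≤ p.asIdeal := by
    intro c hc
    by_contra hcp
    exact hm c hcp ((Ideal.mem_torsionOf_iff m c).mp hc)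
  have h1 : ModuleCat.of R ↥(R ∙ m) ∈ T := hT.submodule_mem hN (R ∙ m)
  have h2 : ModuleCat.of R (R ⧸ Ideal.torsionOf R N m) ∈ T :=
    hT.mem_of_iso (Ideal.quotTorsionOfEquivSpanSingleton R N m).symm.toModuleIso h1
  have h3 := hT.quotient_mem h2
    (Submodule.map (Ideal.torsionOf R N m).mkQ p.asIdeal)
  exact hT.mem_of_iso
    (Submodule.quotientQuotientEquivQuotient (Ideal.torsionOf R N m) p.asIdeal hle).toModuleIso h3

lemma notMem_T_iff {T : Set (ModuleCat.{u} R)} (hT : IsTorsionTheory R T)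
    (hHC : IsHalfCentered T) (N : Type u) [AddCommGroup N] [Module R N] :
    ModuleCat.of R N ∉ T ↔
      ∃ p ∈ Module.support R N, ModuleCat.of R (R ⧸ p.asIdeal) ∉ T := by
  constructor
  · intro h
    by_contra hc
    push_neg at hc
    exact h (hHC (ModuleCat.of R N) fun p hp => hc p hp)
  · rintro ⟨p, hp, hRp⟩ hN
    exact hRp (quot_mem_of_supp hT hN hp)

/-- **Theorem.** Let `𝔗` be a half centered torsion theory, `𝔞` a finitely generated ideal
of `R` (generated by `x₁, …, x_r`) and `M` an `R`-module. Then
`𝔗-Kgrade_R(𝔞, M) = inf { Kgrade_{R_𝔭}(𝔞R_𝔭, M_𝔭) : 𝔭 ∈ 𝔗-Supp_R(M) }`, where `Kgrade`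
is the classical Koszul grade (the grade with respect to the trivial torsion theory). -/
theorem tKgrade_eq_sInf_localized_kGrade (T : Set (ModuleCat.{u} R))
    (hT : IsTorsionTheory R T) (hHC : IsHalfCentered T)
    (a : Ideal R) (M : Type u) [AddCommGroup M] [Module R M]
    {r : ℕ} (x : Fin r → R) (hx : Ideal.span (Set.range x) = a) :
    TKgrade T x M = sInf ((fun p : PrimeSpectrum R =>
        sInf ((↑· : ℕ → ℕ∞) '' {i | Nontrivial
          (koszulCohomology
            (fun j => algebraMap R (Localization p.asIdeal.primeCompl) (x j))
            (LocalizedModule p.asIdeal.primeCompl M) i)})) ''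
      {p : PrimeSpectrum R | p ∈ Module.support R M ∧
        ModuleCat.of R (R ⧸ p.asIdeal) ∉ T}) := by
  have hAiff : ∀ i : ℕ, (ModuleCat.of R (koszulCohomology x M i) ∉ T) ↔
      ∃ p : PrimeSpectrum R, (p ∈ Module.support R M ∧ ModuleCat.of R (R ⧸ p.asIdeal) ∉ T) ∧
        Nontrivial (koszulCohomology
          (fun j => algebraMap R (Localization p.asIdeal.primeCompl) (x j))
          (LocalizedModule p.asIdeal.primeCompl M) i) := by
    intro i
    rw [notMem_T_iff hT hHC]
    constructor
    · rintro ⟨p, hp, hRp⟩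
      have hnt := (key_iff x p i).mpr hp
      have hM : p ∈ Module.support R M := by
        rw [Module.mem_support_iff]
        by_contra hc
        rw [not_nontrivial_iff_subsingleton] at hc
        exact (not_nontrivial_iff_subsingleton.mpr
          (koszulCohomology_subsingleton _ _ i)) hnt
      exact ⟨p, ⟨hM, hRp⟩, hnt⟩
    · rintro ⟨p, ⟨hM, hRp⟩, hnt⟩
      exact ⟨p, (key_iff x p i).mp hnt, hRp⟩
  unfold TKgrade
  apply le_antisymm
  · apply le_sInf
    rintro b ⟨p, hp, rfl⟩
    apply sInf_le_sInf
    apply Set.image_mono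
    intro i hi
    exact (hAiff i).mpr ⟨p, hp, hi⟩
  · apply le_sInf
    rintro b ⟨i, hi, rfl⟩
    obtain ⟨p, hp, hnt⟩ := (hAiff i).mp hi
    refine le_trans (sInf_le (Set.mem_image_of_mem (fun p : PrimeSpectrum R =>
        sInf ((↑· : ℕ → ℕ∞) '' {i | Nontrivial (koszulCohomology
          (fun j => algebraMap R (Localization p.asIdeal.primeCompl) (x j))
          (LocalizedModule p.asIdeal.primeCompl M) i)})) hp))
      (sInf_le (Set.mem_image_of_mem _ hnt))
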